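/- Let f : A* → A* be a morphism and suppose x = f^ω(a) is a pure morphic word generated by f. If z is an infinite word in the shift orbit closure of x all of whose letters are bounded under f, then z is ultimately periodic. -/

import Mathlib

/-- The prefix of length `n` of an infinite word. -/
def wordPrefix {A : Type*} (x : ℕ → A) (n : ℕ) : List A :=
  List.ofFn (fun i : Fin n => x i)

/-- A finite word is a prefix of an infinite word. -/
def IsPrefixOfWord {A : Type*} (w : List A) (x : ℕ → A) : Prop :=
  wordPrefix x w.length = w

/-- A finite word is a factor of an infinite word. -/
def IsFactor {A : Type*} (w : List A) (x : ℕ → A) : Prop :=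
  ∃ i, w = List.ofFn (fun j : Fin w.length => x (i + j))

/-- `y` belongs to the shift orbit closure of `x`. -/
def InOrbitClosure {A : Type*} (y x : ℕ → A) : Prop :=
  ∀ w, IsFactor w y → IsFactor w x

/-- A morphism `A* → B*` applied to a finite word. -/
def applyMorphism {A B : Type*} (f : A → List B) (w : List A) : List B :=
  w.flatMap f

/-- The `n`-th iterate of a morphism applied to a finite word. -/
def applyIter {A : Type*} (f : A → List A) (n : ℕ) (w : List A) : List A :=
  (applyMorphism f)^[n] w

/-- `y = f(x)` for infinite words: every image of a prefix of `x` is a prefix of `y`. -/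
def IsWordImage {A B : Type*} (f : A → List B) (x : ℕ → A) (y : ℕ → B) : Prop :=
  ∀ n, IsPrefixOfWord (applyMorphism f (wordPrefix x n)) y

/-- Prepend a finite word to an infinite word. -/
def prepend {A : Type*} (w : List A) (x : ℕ → A) : ℕ → A :=
  fun n => if h : n < w.length then w.get ⟨n, h⟩ else x (n - w.length)

/-- Strict lexicographic order on infinite words induced by the order `r` on letters. -/
def LexLt {A : Type*} (r : A → A → Prop) (x y : ℕ → A) : Prop :=
  ∃ n, (∀ i, i < n → x i = y i) ∧ r (x n) (y n)

def LexLe {A : Type*} (r : A → A → Prop) (x y : ℕ → A) : Prop :=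
  LexLt r x y ∨ x = y

/-- `l` is the lexicographically least word (w.r.t. `r`) in the shift orbit closure
of `x` beginning with the letter `a`. -/
def IsLeastWord {A : Type*} (r : A → A → Prop) (x : ℕ → A) (a : A) (l : ℕ → A) : Prop :=
  InOrbitClosure l x ∧ l 0 = a ∧ ∀ y, InOrbitClosure y x → y 0 = a → LexLe r l y

/-- `f` is prolongable on `a` (and generates an infinite word from `a`). -/
def IsGenerating {A : Type*} (f : A → List A) (a : A) : Prop :=
  ∃ s, f a = a :: s ∧ s ≠ [] ∧ ∀ n, applyIter f n s ≠ []

/-- `x` is the pure morphic word `f^ω(a)`. -/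
def IsPureMorphic {A : Type*} (f : A → List A) (a : A) (x : ℕ → A) : Prop :=
  x 0 = a ∧ IsGenerating f a ∧ IsWordImage f x x

/-- `x` is a morphic word: the image under a coding of a pure morphic word. -/
def IsMorphic {B : Type*} (x : ℕ → B) : Prop :=
  ∃ (k : ℕ) (g : Fin k → List (Fin k)) (b : Fin k) (c : Fin k → B) (t : ℕ → Fin k),
    IsPureMorphic g b t ∧ x = c ∘ t

/-- `f ∈ M_x`: each letter `b` has a nonempty "marker" word `p b` such that `f(y)`
begins with `p b` whenever `y ∈ S_x` begins with `b`, and the markers of distinct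
letters are prefix-incomparable. -/
def MemM {A B : Type*} (f : A → List B) (x : ℕ → A) : Prop :=
  ∃ p : A → List B, (∀ b, p b ≠ []) ∧
    (∀ (b : A) (y : ℕ → A), InOrbitClosure y x → y 0 = b →
      ∃ n, p b <+: applyMorphism f (wordPrefix y n)) ∧
    (∀ a b : A, a ≠ b → ¬ p a <+: p b ∧ ¬ p b <+: p a)

/-- Every factor occurs infinitely often. -/
def Recurrent {A : Type*} (x : ℕ → A) : Prop :=
  ∀ w, IsFactor w x → ∀ N, ∃ i, N ≤ i ∧ w = List.ofFn (fun j : Fin w.length => x (i + j))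

/-- Ultimately periodic infinite word. -/
def UltimatelyPeriodic {A : Type*} (x : ℕ → A) : Prop :=
  ∃ N p, 0 < p ∧ ∀ n, N ≤ n → x (n + p) = x n

/-- The period-doubling morphism `0 ↦ 01`, `1 ↦ 00`. -/
def pdMorph : Bool → List Bool := fun b => if b then [false, false] else [false, true]

/-- The morphism `0 ↦ 0001`, `1 ↦ 0101`. -/
def gMorph : Bool → List Bool :=
  fun b => if b then [false, true, false, true] else [false, false, false, true]

/-- The Chacon morphism `0 ↦ 0010`, `1 ↦ 1`. -/
def chMorph : Bool → List Bool := fun b => if b then [true] else [false, false, true, false]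

/-- The Rudin–Shapiro morphism `0 ↦ 01`, `1 ↦ 02`, `2 ↦ 31`, `3 ↦ 32`. -/
def rsMorph : Fin 4 → List (Fin 4) := ![[0, 1], [0, 2], [3, 1], [3, 2]]

/-- The Rudin–Shapiro coding `0 ↦ 0`, `1 ↦ 0`, `2 ↦ 1`, `3 ↦ 1`. -/
def rsCoding : Fin 4 → Bool := ![false, false, true, true]

/-- The 2-bit binary representation morphism `0 ↦ 00`, `1 ↦ 01`, `2 ↦ 10`, `3 ↦ 11`. -/
def hMorph : Fin 4 → List Bool := ![[false, false], [false, true], [true, false], [true, true]]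

namespace S3
open List

variable {A : Type*}

/-! ### basics -/

def shiftw (c : ℕ) (z : ℕ → A) : ℕ → A := fun n => z (n + c)

def wpow (w : List A) : ℕ → List A
  | 0 => []
  | k + 1 => w ++ wpow w k

lemma wpow_length (w : List A) (k : ℕ) : (wpow w k).length = k * w.length := by
  induction k with
  | zero => simp [wpow]
  | succ k ih => simp [wpow, ih]; ring

lemma wpow_succ' (w : List A) (k : ℕ) : wpow w (k + 1) = wpow w k ++ w := by
  induction k with
  | zero => simp [wpow]
  | succ k ih =>
    show w ++ wpow w (k+1) = (w ++ wpow w k) ++ w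
    rw [ih, List.append_assoc]

lemma wpow_reverse (w : List A) (k : ℕ) : (wpow w k).reverse = wpow w.reverse k := by
  induction k with
  | zero => simp [wpow]
  | succ k ih =>
    rw [wpow_succ', List.reverse_append, ih]
    rfl

lemma wordPrefix_length (x : ℕ → A) (n : ℕ) : (wordPrefix x n).length = n := by
  simp [wordPrefix]

lemma wordPrefix_getElem? (x : ℕ → A) {n L : ℕ} (h : n < L) :
    (wordPrefix x L)[n]? = some (x n) := by
  simp [wordPrefix, List.getElem?_ofFn, List.ofFnNthVal, h]

lemma getElem?_of_prefix {u v : List A} (h : u <+: v) {n : ℕ} (hn : n < u.length) :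
    v[n]? = u[n]? := by
  obtain ⟨t, rfl⟩ := h
  rw [List.getElem?_append_left hn]

lemma wordPrefix_add (x : ℕ → A) (m n : ℕ) :
    wordPrefix x (m + n) = wordPrefix x m ++ wordPrefix (shiftw m x) n := by
  apply List.ext_getElem?
  intro i
  rcases lt_or_ge i m with h | h
  · rw [wordPrefix_getElem? x (by omega), List.getElem?_append_left (by simpa [wordPrefix_length]),
      wordPrefix_getElem? x h]
  · rcases lt_or_ge i (m + n) with h2 | h2
    · rw [wordPrefix_getElem? x h2, List.getElem?_append_right (by simpa [wordPrefix_length]),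
        wordPrefix_length, wordPrefix_getElem? _ (by omega)]
      simp [shiftw]
      congr 1
      omega
    · have l1 : (wordPrefix x (m+n)).length ≤ i := by rw [wordPrefix_length]; omega
      have l2 : (wordPrefix x m ++ wordPrefix (shiftw m x) n).length ≤ i := by
        simp [wordPrefix_length]; omega
      rw [List.getElem?_eq_none l1, List.getElem?_eq_none l2]

lemma eq_wordPrefix_of_prefix {u : List A} {x : ℕ → A} {L : ℕ}
    (h : u <+: wordPrefix x L) : u = wordPrefix x u.length := by
  have hl : u.length ≤ L := by
    have := h.length_le; rwa [wordPrefix_length] at this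
  apply List.ext_getElem?
  intro n
  rcases lt_or_ge n u.length with hn | hn
  · rw [← getElem?_of_prefix h hn, wordPrefix_getElem? x (by omega),
      wordPrefix_getElem? x hn]
  · rw [List.getElem?_eq_none hn, List.getElem?_eq_none (by simpa [wordPrefix_length])]

lemma prefix_cancel {u v w : List A} (h : u ++ v <+: u ++ w) : v <+: w :=
  (List.prefix_append_right_inj u).mp h

/-- if `u <+: wordPrefix z L` and `c ≤ L` with `c ≤ u.length`... helper:
    decomposition of a long prefix. -/
lemma wordPrefix_split {z : ℕ → A} {L c : ℕ} (h : c ≤ L) :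
    wordPrefix z L = wordPrefix z c ++ wordPrefix (shiftw c z) (L - c) := by
  have : L = c + (L - c) := by omega
  rw [this, wordPrefix_add]
  congr 2
  omega

lemma up_of_shift {z : ℕ → A} {c : ℕ} (h : UltimatelyPeriodic (shiftw c z)) :
    UltimatelyPeriodic z := by
  obtain ⟨N, p, hp, hper⟩ := h
  refine ⟨N + c, p, hp, fun n hn => ?_⟩
  have h1 := hper (n - c) (by omega)
  simp only [shiftw] at h1
  have e1 : n - c + p + c = n + p := by omega
  have e2 : n - c + c = n := by omega
  rwa [e1, e2] at h1

lemma wpow_getElem?_small {w : List A} {k i : ℕ} (hk : 1 ≤ k) (hi : i < w.length) :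
    (wpow w k)[i]? = w[i]? := by
  cases k with
  | zero => omega
  | succ k => show (w ++ wpow w k)[i]? = _; rw [List.getElem?_append_left hi]

lemma wpow_getElem?_per (w : List A) (k : ℕ) : ∀ i, i + w.length < (wpow w k).length →
    (wpow w k)[i + w.length]? = (wpow w k)[i]? := by
  induction k with
  | zero => intro i h; simp [wpow] at h
  | succ k ih =>
    intro i h
    have hlen : (wpow w (k+1)).length = w.length + (wpow w k).length := by
      simp only [wpow, List.length_append]
    rw [hlen] at h
    have hw : 0 < w.length := by
      rcases Nat.eq_zero_or_pos w.length with h0 | h0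
      · rw [wpow_length, h0, Nat.mul_zero] at h; omega
      · exact h0
    show (w ++ wpow w k)[i + w.length]? = (w ++ wpow w k)[i]?
    rcases lt_or_ge i w.length with hi | hi
    · rw [List.getElem?_append_right (by omega), List.getElem?_append_left hi]
      have e0 : i + w.length - w.length = i := by omega
      rw [e0]
      have hk1 : 1 ≤ k := by
        rcases Nat.eq_zero_or_pos k with h0 | h0
        · subst h0; simp [wpow] at h
        · exact h0
      exact wpow_getElem?_small hk1 hi
    · rw [List.getElem?_append_right (by omega), List.getElem?_append_right hi]
      have e1 : i + w.length - w.length = i - w.length + w.length := by omega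
      rw [e1, ih]
      omega

/-- If arbitrarily long prefixes of `z` are prefixes of powers of `w`, `z` is UP. -/
lemma up_of_pattern {z : ℕ → A} {w : List A} (hw : w ≠ [])
    (h : ∀ j, ∃ L k, j + w.length < L ∧ wordPrefix z L <+: wpow w k) :
    UltimatelyPeriodic z := by
  have hwl : 0 < w.length := List.length_pos_iff.mpr hw
  refine ⟨0, w.length, hwl, fun n _ => ?_⟩
  obtain ⟨L, k, hL, hpre⟩ := h n
  have hlen : L ≤ (wpow w k).length := by
    have := hpre.length_le; rwa [wordPrefix_length] at this
  have g1 : (wpow w k)[n + w.length]? = some (z (n + w.length)) := by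
    rw [getElem?_of_prefix hpre (by rw [wordPrefix_length]; omega)]
    exact wordPrefix_getElem? z (by omega)
  have g2 : (wpow w k)[n]? = some (z n) := by
    rw [getElem?_of_prefix hpre (by rw [wordPrefix_length]; omega)]
    exact wordPrefix_getElem? z (by omega)
  have := wpow_getElem?_per w k n (by omega)
  rw [g1, g2] at this
  exact Option.some_injective _ this

/-! ### pigeonhole helpers -/

lemma freq_pigeon {ι : Type*} [Finite ι] (Q : ℕ → ι → Prop)
    (h : ∀ N, ∃ L, N ≤ L ∧ ∃ v, Q L v) : ∃ v, ∀ N, ∃ L, N ≤ L ∧ Q L v := by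
  by_contra hc
  push_neg at hc
  choose Nf hNf using hc
  have : Fintype ι := Fintype.ofFinite ι
  obtain ⟨L, hL, v, hQ⟩ := h (Finset.univ.sup Nf)
  exact hNf v L (le_trans (Finset.le_sup (Finset.mem_univ v)) hL) hQ

lemma freq_split {P Q R : ℕ → Prop} (h : ∀ N, ∃ L, N ≤ L ∧ P L)
    (himp : ∀ L, P L → Q L ∨ R L) :
    (∀ N, ∃ L, N ≤ L ∧ Q L) ∨ (∀ N, ∃ L, N ≤ L ∧ R L) := by
  by_cases hq : ∀ N, ∃ L, N ≤ L ∧ Q L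
  · exact Or.inl hq
  · push_neg at hq
    obtain ⟨N₀, hN₀⟩ := hq
    right
    intro N
    obtain ⟨L, hL, hP⟩ := h (max N N₀)
    rcases himp L hP with hQ | hR
    · exact absurd hQ (hN₀ L (le_trans (le_max_right _ _) hL))
    · exact ⟨L, le_trans (le_max_left _ _) hL, hR⟩

/-! ### template machinery -/

def pexp : List A × Bool → ℕ → List A
  | (w, false), _ => w
  | (w, true), e => wpow w e

def pjoin : List (List A × Bool) → (ℕ → ℕ) → List A
  | [], _ => []
  | P :: t, es => pexp P (es 0) ++ pjoin t (fun i => es (i + 1))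

lemma pjoin_congr : ∀ (ps : List (List A × Bool)) {es es' : ℕ → ℕ},
    (∀ i, es i = es' i) → pjoin ps es = pjoin ps es'
  | [], _, _, _ => rfl
  | P :: t, es, es', h => by
    simp only [pjoin]
    rw [h 0, pjoin_congr t (fun i => h (i + 1))]

lemma Tpre : ∀ (ps : List (List A × Bool)) (z : ℕ → A),
    (∀ N, ∃ L, N ≤ L ∧ ∃ es, wordPrefix z L <+: pjoin ps es) → UltimatelyPeriodic z := by
  intro ps
  induction ps with
  | nil =>
    intro z h
    obtain ⟨L, hL, es, hp⟩ := h 1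
    rw [show pjoin [] es = [] from rfl, List.prefix_nil] at hp
    have := congrArg List.length hp
    rw [wordPrefix_length, List.length_nil] at this
    omega
  | cons P t ih =>
    obtain ⟨w, flag⟩ := P
    cases flag with
    | false =>
      intro z h
      have key : ∀ N, ∃ L, N ≤ L ∧ ∃ es, wordPrefix (shiftw w.length z) L <+: pjoin t es := by
        intro N
        obtain ⟨L, hL, es, hp⟩ := h (N + w.length)
        rw [show pjoin ((w, false) :: t) es = w ++ pjoin t (fun i => es (i+1)) from rfl] at hp
        have hw_le : w.length ≤ L := by omega
        have hwp : w <+: wordPrefix z L :=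
          List.prefix_of_prefix_length_le ⟨pjoin t (fun i => es (i+1)), rfl⟩ hp
            (by rw [wordPrefix_length]; exact hw_le)
        have hw_eq : w = wordPrefix z w.length := eq_wordPrefix_of_prefix hwp
        rw [wordPrefix_split hw_le, ← hw_eq] at hp
        exact ⟨L - w.length, by omega, _, prefix_cancel hp⟩
      exact up_of_shift (ih _ key)
    | true =>
      intro z h
      have himp : ∀ L, (∃ es, wordPrefix z L <+: pjoin ((w, true) :: t) es) →
          (∃ k, wordPrefix z L <+: wpow w k) ∨
          (∃ es, wordPrefix z L <+: pjoin ((w, true) :: t) es ∧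
            es 0 * w.length < L ∧ wpow w (es 0) = wordPrefix z (es 0 * w.length)) := by
        intro L hP
        obtain ⟨es, hp⟩ := hP
        have hpj : pjoin ((w, true) :: t) es = wpow w (es 0) ++ pjoin t (fun i => es (i+1)) := rfl
        rcases le_or_gt L (es 0 * w.length) with hle | hlt
        · left
          refine ⟨es 0, List.prefix_of_prefix_length_le hp ?_ ?_⟩
          · rw [hpj]; exact ⟨_, rfl⟩
          · rw [wordPrefix_length, wpow_length]; exact hle
        · right
          refine ⟨es, hp, hlt, ?_⟩
          have hwp : wpow w (es 0) <+: wordPrefix z L := by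
            refine List.prefix_of_prefix_length_le ?_ hp ?_
            · rw [hpj]; exact ⟨_, rfl⟩
            · rw [wordPrefix_length, wpow_length]; omega
          have := eq_wordPrefix_of_prefix hwp
          rwa [wpow_length] at this
      rcases freq_split h himp with hQ | hR
      · -- prefixes of z are prefixes of powers of w
        have hw_ne : w ≠ [] := by
          obtain ⟨L, hL, k, hp⟩ := hQ 1
          have := hp.length_le
          rw [wordPrefix_length, wpow_length] at this
          intro hnil
          rw [hnil, List.length_nil, Nat.mul_zero] at this
          omega
        refine up_of_pattern hw_ne ?_
        intro j
        obtain ⟨L, hL, k, hp⟩ := hQ (j + w.length + 1)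
        exact ⟨L, k, by omega, hp⟩
      · by_cases hbig : ∀ M, ∃ L, M ≤ L ∧ ∃ es,
          wordPrefix z L <+: pjoin ((w, true) :: t) es ∧
          es 0 * w.length < L ∧ wpow w (es 0) = wordPrefix z (es 0 * w.length) ∧
          M ≤ es 0 * w.length
        · have hw_ne : w ≠ [] := by
            obtain ⟨L, hL, es, _, _, _, hM⟩ := hbig 1
            intro hnil
            rw [hnil] at hM; simp at hM
          refine up_of_pattern hw_ne ?_
          intro j
          obtain ⟨L, hL, es, _, _, heq, hM⟩ := hbig (j + w.length + 1)
          exact ⟨es 0 * w.length, es 0, by omega, heq ▸ List.prefix_refl _⟩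
        · push_neg at hbig
          obtain ⟨M, hM⟩ := hbig
          have hfr : ∀ N, ∃ L, N ≤ L ∧ ∃ c : Fin M,
              ∃ es, wordPrefix z L <+: pjoin ((w, true) :: t) es ∧
              es 0 * w.length < L ∧ wpow w (es 0) = wordPrefix z (es 0 * w.length) ∧
              es 0 * w.length = (c : ℕ) := by
            intro N
            obtain ⟨L, hL, es, hp, hlt, heq⟩ := hR (max N M)
            have hcM : es 0 * w.length < M :=
              hM L (le_trans (le_max_right _ _) hL) es hp hlt heq
            exact ⟨L, le_trans (le_max_left _ _) hL, ⟨es 0 * w.length, hcM⟩, es, hp, hlt, heq, rfl⟩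
          obtain ⟨c, hc⟩ := freq_pigeon _ hfr
          have key : ∀ N, ∃ L, N ≤ L ∧ ∃ es, wordPrefix (shiftw (c : ℕ) z) L <+: pjoin t es := by
            intro N
            obtain ⟨L, hL, es, hp, hlt, heq, hceq⟩ := hc (N + (c : ℕ))
            rw [show pjoin ((w, true) :: t) es
                = wpow w (es 0) ++ pjoin t (fun i => es (i+1)) from rfl, heq, hceq] at hp
            rw [wordPrefix_split (show (c:ℕ) ≤ L by omega)] at hp
            exact ⟨L - (c : ℕ), by omega, _, prefix_cancel hp⟩
          exact up_of_shift (ih _ key)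

lemma drop_wpow (w : List A) : ∀ (e s : ℕ), s < e * w.length →
    ∃ e', (wpow w e).drop s = w.drop (s % w.length) ++ wpow w e'
  | 0, s, h => by omega
  | e + 1, s, h => by
    have hw : 0 < w.length := by
      rcases Nat.eq_zero_or_pos w.length with h0 | h0
      · rw [h0, Nat.mul_zero] at h; omega
      · exact h0
    rcases lt_or_ge s w.length with hs | hs
    · exact ⟨e, by rw [show wpow w (e+1) = w ++ wpow w e from rfl,
        List.drop_append_of_le_length (le_of_lt hs), Nat.mod_eq_of_lt hs]⟩
    · have hmul : (e + 1) * w.length = w.length + e * w.length := by ring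
      obtain ⟨e', he'⟩ := drop_wpow w e (s - w.length) (by omega)
      refine ⟨e', ?_⟩
      have e1 : (wpow w (e+1)).drop s = (wpow w e).drop (s - w.length) := by
        conv_lhs => rw [show wpow w (e+1) = w ++ wpow w e from rfl,
          show s = w.length + (s - w.length) by omega]
        exact List.drop_length_add_append _
      rw [e1, he', ← Nat.mod_eq_sub_mod hs]

lemma Tfac : ∀ (ps : List (List A × Bool)) (z : ℕ → A),
    (∀ N, ∃ L, N ≤ L ∧ ∃ es s, wordPrefix z L <+: (pjoin ps es).drop s) →
    UltimatelyPeriodic z := by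
  intro ps
  induction ps with
  | nil =>
    intro z h
    obtain ⟨L, hL, es, s, hp⟩ := h 1
    rw [show pjoin [] es = [] from rfl, List.drop_nil, List.prefix_nil] at hp
    have := congrArg List.length hp
    rw [wordPrefix_length, List.length_nil] at this
    omega
  | cons P t ih =>
    obtain ⟨w, flag⟩ := P
    intro z h
    have himp : ∀ L, (∃ es s, wordPrefix z L <+: (pjoin ((w, flag) :: t) es).drop s) →
        (∃ es s, wordPrefix z L <+: (pjoin ((w, flag) :: t) es).drop s ∧
          s < (pexp (w, flag) (es 0)).length) ∨
        (∃ es s, wordPrefix z L <+: (pjoin t es).drop s) := by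
      intro L hP
      obtain ⟨es, s, hp⟩ := hP
      rcases lt_or_ge s (pexp (w, flag) (es 0)).length with hlt | hge
      · exact Or.inl ⟨es, s, hp, hlt⟩
      · right
        refine ⟨fun i => es (i+1), s - (pexp (w, flag) (es 0)).length, ?_⟩
        rwa [show pjoin ((w, flag) :: t) es
            = pexp (w, flag) (es 0) ++ pjoin t (fun i => es (i+1)) from rfl,
          show s = (pexp (w, flag) (es 0)).length + (s - (pexp (w, flag) (es 0)).length)
            by omega, List.drop_length_add_append] at hp
    rcases freq_split h himp with hQ | hR
    · cases flag with
      | false =>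
        -- pexp = w ; pigeonhole on s < w.length
        have hfr : ∀ N, ∃ L, N ≤ L ∧ ∃ c : Fin w.length,
            ∃ es, wordPrefix z L <+: pjoin ((w.drop (c : ℕ), false) :: t) es := by
          intro N
          obtain ⟨L, hL, es, s, hp, hs⟩ := hQ N
          rw [show (pexp (w, false) (es 0)).length = w.length from rfl] at hs
          refine ⟨L, hL, ⟨s, hs⟩, es, ?_⟩
          rwa [show pjoin ((w, false) :: t) es = w ++ pjoin t (fun i => es (i+1)) from rfl,
            List.drop_append_of_le_length (le_of_lt hs)] at hp
        obtain ⟨c, hc⟩ := freq_pigeon _ hfr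
        exact Tpre _ z hc
      | true =>
        -- pexp = wpow w e ; pigeonhole on s % w.length
        have hfr : ∀ N, ∃ L, N ≤ L ∧ ∃ c : Fin w.length,
            ∃ es, wordPrefix z L <+:
              pjoin ((w.drop (c : ℕ), false) :: (w, true) :: t) es := by
          intro N
          obtain ⟨L, hL, es, s, hp, hs⟩ := hQ N
          rw [show (pexp (w, true) (es 0)).length = (wpow w (es 0)).length from rfl,
            wpow_length] at hs
          have hw : 0 < w.length := by
            rcases Nat.eq_zero_or_pos w.length with h0 | h0
            · rw [h0, Nat.mul_zero] at hs; omega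
            · exact h0
          obtain ⟨e', he'⟩ := drop_wpow w (es 0) s hs
          refine ⟨L, hL, ⟨s % w.length, Nat.mod_lt _ hw⟩,
            (fun i => match i with | 0 => 0 | 1 => e' | (i+2) => es (i+1)), ?_⟩
          rw [show pjoin ((w, true) :: t) es = wpow w (es 0) ++ pjoin t (fun i => es (i+1))
            from rfl, List.drop_append_of_le_length (by rw [wpow_length]; omega), he'] at hp
          rw [show pjoin ((w.drop (s % w.length), false) :: (w, true) :: t)
              (fun i => match i with | 0 => 0 | 1 => e' | (i+2) => es (i+1))
            = w.drop (s % w.length) ++ (wpow w e' ++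
              pjoin t (fun i => es (i+1))) from rfl]
          rwa [← List.append_assoc]
        obtain ⟨c, hc⟩ := freq_pigeon _ hfr
        exact Tpre _ z hc
    · exact ih z hR
/-! ### morphism basics -/

lemma am_append (f : A → List A) (u v : List A) :
    applyMorphism f (u ++ v) = applyMorphism f u ++ applyMorphism f v :=
  List.flatMap_append

lemma am_single (f : A → List A) (c : A) : applyMorphism f [c] = f c := by
  simp [applyMorphism]

lemma ai_zero (f : A → List A) (u : List A) : applyIter f 0 u = u := rfl

lemma ai_succ_left (f : A → List A) (n : ℕ) (u : List A) :
    applyIter f (n + 1) u = applyIter f n (applyMorphism f u) :=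
  Function.iterate_succ_apply _ _ _

lemma ai_succ_right (f : A → List A) (n : ℕ) (u : List A) :
    applyIter f (n + 1) u = applyMorphism f (applyIter f n u) :=
  Function.iterate_succ_apply' _ _ _

lemma ai_add (f : A → List A) (m n : ℕ) (u : List A) :
    applyIter f (m + n) u = applyIter f m (applyIter f n u) :=
  Function.iterate_add_apply _ _ _ _

lemma ai_nil (f : A → List A) (n : ℕ) : applyIter f n [] = [] := by
  induction n with
  | zero => rfl
  | succ n ih => rw [ai_succ_left]; exact ih

lemma ai_append (f : A → List A) (n : ℕ) (u v : List A) :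
    applyIter f n (u ++ v) = applyIter f n u ++ applyIter f n v := by
  induction n generalizing u v with
  | zero => rfl
  | succ n ih => rw [ai_succ_left, am_append, ih, ai_succ_left, ai_succ_left]

lemma ai_blocks (f : A → List A) (n : ℕ) (u : List A) :
    applyIter f n u = u.flatMap (fun c => applyIter f n [c]) := by
  induction u with
  | nil => rw [ai_nil]; rfl
  | cons c t ih =>
    rw [show c :: t = [c] ++ t from rfl, ai_append, ih]
    rfl

/-! ### bounded letters -/

section Bdd
variable [Fintype A]

def Bdd (f : A → List A) (b : A) : Prop := ∃ k, ∀ n, (applyIter f n [b]).length ≤ k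

def Bw (f : A → List A) (w : List A) : Prop := ∀ b ∈ w, Bdd f b

open Classical in
noncomputable def KbFun (f : A → List A) (b : A) : ℕ :=
  if h : Bdd f b then Classical.choose h else 0

noncomputable def Kb (f : A → List A) : ℕ := Finset.univ.sup (KbFun f)

lemma Kb_spec {f : A → List A} {b : A} (h : Bdd f b) (n : ℕ) :
    (applyIter f n [b]).length ≤ Kb f := by
  have h2 : KbFun f b ≤ Finset.univ.sup (KbFun f) :=
    Finset.le_sup (f := KbFun f) (Finset.mem_univ b)
  have h3 : KbFun f b = Classical.choose h := dif_pos h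
  rw [h3] at h2
  exact le_trans (Classical.choose_spec h n) h2

lemma bdd_of_mem {f : A → List A} {b c : A} {n : ℕ} (hb : Bdd f b)
    (hc : c ∈ applyIter f n [b]) : Bdd f c := by
  obtain ⟨s, t, hst⟩ := List.append_of_mem hc
  obtain ⟨k, hk⟩ := hb
  refine ⟨k, fun j => ?_⟩
  have h1 : applyIter f (j + n) [b] = applyIter f j s ++ applyIter f j [c] ++ applyIter f j t := by
    rw [ai_add, hst, show s ++ c :: t = s ++ [c] ++ t by simp, ai_append, ai_append]
  have h2 := hk (j + n)
  rw [h1] at h2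
  simp only [List.length_append] at h2
  omega

lemma bw_ai {f : A → List A} {u : List A} (h : Bw f u) (n : ℕ) :
    Bw f (applyIter f n u) := by
  intro b hb
  rw [ai_blocks] at hb
  obtain ⟨c, hc, hbc⟩ := List.mem_flatMap.mp hb
  exact bdd_of_mem (h c hc) hbc

lemma bw_len {f : A → List A} {u : List A} (h : Bw f u) (n : ℕ) :
    (applyIter f n u).length ≤ Kb f * u.length := by
  induction u with
  | nil => rw [ai_nil]; simp
  | cons c t ih =>
    rw [show c :: t = [c] ++ t from rfl, ai_append]
    have h1 : Bdd f c := h c (by simp)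
    have h2 : Bw f t := fun b hb => h b (by simp [hb])
    have e1 := Kb_spec h1 n
    have e2 := ih h2
    simp only [List.length_append, List.length_cons, List.length_nil]
    have e : Kb f * (0 + 1 + t.length) = Kb f + Kb f * t.length := by ring
    rw [e]
    omega

lemma bdd_of_ai_bw {f : A → List A} {c : A} {m : ℕ}
    (h : Bw f (applyIter f m [c])) : Bdd f c := by
  refine ⟨(Finset.range (m + 1)).sup (fun j => (applyIter f j [c]).length)
    + Kb f * (applyIter f m [c]).length, fun n => ?_⟩
  rcases le_or_gt n m with hn | hn
  · have : (applyIter f n [c]).length ≤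
        (Finset.range (m + 1)).sup (fun j => (applyIter f j [c]).length) :=
      Finset.le_sup (f := fun j => (applyIter f j [c]).length) (Finset.mem_range.mpr (by omega))
    omega
  · have h1 : applyIter f n [c] = applyIter f (n - m) (applyIter f m [c]) := by
      rw [← ai_add, show n - m + m = n by omega]
    have := bw_len h (n - m)
    rw [← h1] at this
    omega

lemma unbdd_ex {f : A → List A} {c : A} {m : ℕ} (h : ¬ Bdd f c) :
    ∃ b ∈ applyIter f m [c], ¬ Bdd f b := by
  by_contra hh
  push_neg at hh
  exact h (bdd_of_ai_bw (fun b hb => hh b hb))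

noncomputable def Mb (f : A → List A) : ℕ := Finset.univ.sup (fun b : A => (f b).length)

lemma Mb_spec (f : A → List A) (b : A) : (f b).length ≤ Mb f :=
  Finset.le_sup (f := fun b : A => (f b).length) (Finset.mem_univ b)

/-- eventual periodicity of iterates on bounded letters -/
lemma exists_np (f : A → List A) : ∃ n₀ p, 0 < p ∧
    ∀ b, Bdd f b → ∀ j, n₀ ≤ j → applyIter f (j + p) [b] = applyIter f j [b] := by
  classical
  have : Finite {l : List A // l.length ≤ Kb f} := (List.finite_length_le A (Kb f)).to_subtype
  set G : ℕ → (A → {l : List A // l.length ≤ Kb f}) := fun n b =>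
    if h : Bdd f b then ⟨applyIter f n [b], Kb_spec h n⟩ else ⟨[], by simp⟩ with hG
  obtain ⟨n₁, n₂, hne, heq⟩ := Finite.exists_ne_map_eq_of_infinite G
  wlog hlt : n₁ < n₂ generalizing n₁ n₂
  · exact this n₂ n₁ hne.symm heq.symm (by omega)
  refine ⟨n₁, n₂ - n₁, by omega, fun b hb j hj => ?_⟩
  have hval : applyIter f n₂ [b] = applyIter f n₁ [b] := by
    have := congrFun heq b
    rw [hG] at this
    simp only [dif_pos hb] at this
    exact (congrArg Subtype.val this).symm
  rw [show j + (n₂ - n₁) = (j - n₁) + n₂ by omega, ai_add, hval, ← ai_add,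
    show j - n₁ + n₁ = j by omega]

lemma per_word {f : A → List A} {n₀ p : ℕ}
    (hp : ∀ b, Bdd f b → ∀ j, n₀ ≤ j → applyIter f (j + p) [b] = applyIter f j [b])
    {u : List A} (hu : Bw f u) {j : ℕ} (hj : n₀ ≤ j) :
    applyIter f (j + p) u = applyIter f j u := by
  induction u with
  | nil => rw [ai_nil, ai_nil]
  | cons c t ih =>
    rw [show c :: t = [c] ++ t from rfl, ai_append, ai_append,
      hp c (hu c (by simp)) j hj, ih (fun b hb => hu b (by simp [hb]))]

lemma per_word_iter {f : A → List A} {n₀ p : ℕ}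
    (hp : ∀ b, Bdd f b → ∀ j, n₀ ≤ j → applyIter f (j + p) [b] = applyIter f j [b])
    {u : List A} (hu : Bw f u) {j : ℕ} (hj : n₀ ≤ j) (t : ℕ) :
    applyIter f (j + p * t) u = applyIter f j u := by
  induction t with
  | zero => rfl
  | succ t ih =>
    rw [show j + p * (t + 1) = (j + p * t) + p by ring, per_word hp hu (by omega), ih]

/-! ### maximal bounded prefix and first unbounded letter -/

open Classical in
noncomputable def maxBpre (f : A → List A) : List A → List A
  | [] => []
  | c :: t => if Bdd f c then c :: maxBpre f t else []

lemma maxBpre_prefix (f : A → List A) (l : List A) : maxBpre f l <+: l := by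
  induction l with
  | nil => exact List.prefix_refl _
  | cons c t ih =>
    rw [maxBpre]
    split
    · exact (List.prefix_cons_inj c).mpr ih
    · exact List.nil_prefix

lemma maxBpre_bw (f : A → List A) (l : List A) : Bw f (maxBpre f l) := by
  induction l with
  | nil => intro b hb; simp [maxBpre] at hb
  | cons c t ih =>
    rw [maxBpre]
    split
    · next h =>
      intro b hb
      rcases List.mem_cons.mp hb with rfl | hb'
      · exact h
      · exact ih b hb'
    · intro b hb; simp at hb

lemma maxBpre_append_bw {f : A → List A} {u : List A} (hu : Bw f u) (v : List A) :
    maxBpre f (u ++ v) = u ++ maxBpre f v := by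
  induction u with
  | nil => rfl
  | cons c t ih =>
    have h1 : Bdd f c := hu c (by simp)
    rw [List.cons_append, maxBpre, if_pos h1, ih (fun b hb => hu b (by simp [hb]))]
    rfl

lemma maxBpre_stop {f : A → List A} {X : List A} (h : ∃ c ∈ X, ¬ Bdd f c) (Y : List A) :
    maxBpre f (X ++ Y) = maxBpre f X := by
  induction X with
  | nil => obtain ⟨c, hc, _⟩ := h; simp at hc
  | cons c t ih =>
    rw [List.cons_append, maxBpre, maxBpre]
    split
    · next hc =>
      obtain ⟨c', hc', hbc'⟩ := h
      rcases List.mem_cons.mp hc' with rfl | h'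
      · exact absurd hc hbc'
      · rw [ih ⟨c', h', hbc'⟩]
    · rfl

lemma prefix_maxBpre {f : A → List A} {u l : List A} (h : u <+: l) (hu : Bw f u) :
    u <+: maxBpre f l := by
  induction l generalizing u with
  | nil => rw [List.prefix_nil] at h; simp [h]
  | cons c t ih =>
    rcases u with _ | ⟨b, u'⟩
    · exact List.nil_prefix
    · obtain ⟨rfl, h'⟩ := List.cons_prefix_cons.mp h
      have hbdd : Bdd f b := hu b (by simp)
      rw [maxBpre, if_pos hbdd]
      exact List.cons_prefix_cons.mpr ⟨rfl, ih h' (fun x hx => hu x (by simp [hx]))⟩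

end Bdd
section Bdd2
variable [Fintype A]

open Classical in
noncomputable def splitU (f : A → List A) : List A → Option (List A × A × List A)
  | [] => none
  | c :: t =>
    if Bdd f c then (splitU f t).map (fun p => (c :: p.1, p.2.1, p.2.2)) else some ([], c, t)

lemma splitU_none {f : A → List A} : ∀ {l : List A}, splitU f l = none → Bw f l := by
  intro l
  induction l with
  | nil => intro _ b hb; simp at hb
  | cons c t ih =>
    intro h
    rw [splitU] at h
    split at h
    · next hc =>
      have ht : splitU f t = none := by
        rcases hsp : splitU f t with _ | v
        · rfl
        · rw [hsp] at h; simp at h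
      intro b hb
      rcases List.mem_cons.mp hb with rfl | hb'
      · exact hc
      · exact ih ht b hb'
    · simp at h

lemma splitU_some {f : A → List A} : ∀ {l u v : List A} {e : A},
    splitU f l = some (u, e, v) → l = u ++ e :: v ∧ Bw f u ∧ ¬ Bdd f e := by
  intro l
  induction l with
  | nil => intro u v e h; rw [splitU] at h; simp at h
  | cons c t ih =>
    intro u v e h
    rw [splitU] at h
    split at h
    · next hc =>
      rcases hsp : splitU f t with _ | ⟨⟨u', e', v'⟩⟩
      · rw [hsp] at h; simp at h
      · rw [hsp] at h
        simp only [Option.map_some, Option.some.injEq, Prod.ext_iff] at h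
        obtain ⟨h1, h2, h3⟩ := h
        obtain ⟨ht, hbwu', hne⟩ := ih hsp
        refine ⟨?_, ?_, h2 ▸ hne⟩
        · rw [← h1, ← h3, ht, ← h2]; rfl
        · intro b hb
          rw [← h1] at hb
          rcases List.mem_cons.mp hb with rfl | hb'
          · exact hc
          · exact hbwu' b hb'
    · next hc =>
      simp only [Option.some.injEq, Prod.ext_iff] at h
      obtain ⟨h1, h2, h3⟩ := h
      refine ⟨by rw [← h1, ← h2, ← h3]; rfl, ?_, h2 ▸ hc⟩
      intro b hb; rw [← h1] at hb; simp at hb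

lemma splitU_ex {f : A → List A} {l : List A} (h : ¬ Bw f l) :
    ∃ u e v, splitU f l = some (u, e, v) := by
  rcases hsp : splitU f l with _ | ⟨⟨u, e, v⟩⟩
  · exact absurd (splitU_none hsp) h
  · exact ⟨u, e, v, rfl⟩

noncomputable def Lf (f : A → List A) (d : A) : List A :=
  match splitU f (f d) with
  | some (u, _, _) => u
  | none => []

noncomputable def muF (f : A → List A) (d : A) : A :=
  match splitU f (f d) with
  | some (_, e, _) => e
  | none => d

noncomputable def Rf (f : A → List A) (d : A) : List A :=
  match splitU f (f d) with
  | some (_, _, v) => v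
  | none => []

lemma fd_not_bw {f : A → List A} {d : A} (hd : ¬ Bdd f d) : ¬ Bw f (f d) := by
  intro hbw
  have : f d = applyIter f 1 [d] := by rw [ai_succ_left, am_single, ai_zero]
  exact hd (bdd_of_ai_bw (this ▸ hbw))

lemma Lf_spec {f : A → List A} {d : A} (hd : ¬ Bdd f d) :
    f d = Lf f d ++ muF f d :: Rf f d ∧ Bw f (Lf f d) ∧ ¬ Bdd f (muF f d) := by
  obtain ⟨u, e, v, hsp⟩ := splitU_ex (fd_not_bw hd)
  obtain ⟨h1, h2, h3⟩ := splitU_some hsp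
  simp only [Lf, muF, Rf, hsp]
  exact ⟨h1, h2, h3⟩

lemma Lf_len {f : A → List A} (d : A) : (Lf f d).length ≤ Mb f := by
  rcases hsp : splitU f (f d) with _ | ⟨⟨u, e, v⟩⟩
  · simp [Lf, hsp]
  · simp only [Lf, hsp]
    have := (splitU_some hsp).1
    have h2 := Mb_spec f d
    rw [this] at h2
    simp only [List.length_append, List.length_cons] at h2
    omega

lemma mu_unbdd {f : A → List A} {d : A} (hd : ¬ Bdd f d) : ¬ Bdd f (muF f d) :=
  (Lf_spec hd).2.2

lemma mu_iter_unbdd {f : A → List A} {d : A} (hd : ¬ Bdd f d) (i : ℕ) :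
    ¬ Bdd f ((muF f)^[i] d) := by
  induction i with
  | zero => exact hd
  | succ i ih => rw [Function.iterate_succ_apply']; exact mu_unbdd ih

/-! ### the maximal bounded prefix of iterates -/

noncomputable def Pm (f : A → List A) (m : ℕ) (d : A) : List A :=
  maxBpre f (applyIter f m [d])

lemma Pm_zero_len (f : A → List A) (d : A) : (Pm f 0 d).length ≤ 1 := by
  have := (maxBpre_prefix f (applyIter f 0 [d])).length_le
  rw [ai_zero] at this
  exact this

lemma Pm_rec {f : A → List A} {d : A} (hd : ¬ Bdd f d) (m : ℕ) :
    Pm f (m + 1) d = applyIter f m (Lf f d) ++ Pm f m (muF f d) := by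
  obtain ⟨h1, h2, h3⟩ := Lf_spec hd
  have e1 : applyIter f (m + 1) [d] =
      applyIter f m (Lf f d) ++ (applyIter f m [muF f d] ++ applyIter f m (Rf f d)) := by
    rw [ai_succ_left, am_single, h1, show Lf f d ++ muF f d :: Rf f d
      = Lf f d ++ ([muF f d] ++ Rf f d) by simp, ai_append, ai_append]
  rw [Pm, e1, maxBpre_append_bw (bw_ai h2 m), maxBpre_stop (unbdd_ex h3)]
  rfl

/-! ### join of a family of segments -/

def jn (g : ℕ → List A) : ℕ → ℕ → List A
  | _, 0 => []
  | s, t + 1 => g s ++ jn g (s + 1) t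

lemma jn_add (g : ℕ → List A) (s t₁ t₂ : ℕ) :
    jn g s (t₁ + t₂) = jn g s t₁ ++ jn g (s + t₁) t₂ := by
  induction t₁ generalizing s with
  | zero => simp [jn]
  | succ t₁ ih =>
    rw [show t₁ + 1 + t₂ = (t₁ + t₂) + 1 by omega]
    show g s ++ jn g (s + 1) (t₁ + t₂) = (g s ++ jn g (s + 1) t₁) ++ jn g (s + (t₁ + 1)) t₂
    rw [ih, List.append_assoc, show s + 1 + t₁ = s + (t₁ + 1) by omega]

lemma jn_congr {g g' : ℕ → List A} : ∀ (s t : ℕ),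
    (∀ i, s ≤ i → i < s + t → g i = g' i) → jn g s t = jn g' s t := by
  intro s t
  induction t generalizing s with
  | zero => intro _; rfl
  | succ t ih =>
    intro h
    show g s ++ jn g (s + 1) t = g' s ++ jn g' (s + 1) t
    rw [h s (le_refl s) (by omega), ih (s + 1) (fun i h1 h2 => h i (by omega) (by omega))]

lemma jn_len {g : ℕ → List A} {c : ℕ} : ∀ (s t : ℕ),
    (∀ i, s ≤ i → i < s + t → (g i).length ≤ c) → (jn g s t).length ≤ t * c := by
  intro s t
  induction t generalizing s with
  | zero => intro _; simp [jn]
  | succ t ih =>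
    intro h
    show (g s ++ jn g (s + 1) t).length ≤ (t + 1) * c
    rw [List.length_append]
    have h1 := h s (le_refl s) (by omega)
    have h2 := ih (s + 1) (fun i ha hb => h i (by omega) (by omega))
    calc (g s).length + (jn g (s + 1) t).length ≤ c + t * c := by omega
      _ = (t + 1) * c := by ring

lemma jn_shift {g : ℕ → List A} {a b Λ : ℕ}
    (hper : ∀ i, a ≤ i → i + Λ ≤ b → g (i + Λ) = g i) :
    ∀ (s t : ℕ), a ≤ s → s + t + Λ ≤ b → jn g (s + Λ) t = jn g s t := by
  intro s t
  induction t generalizing s with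
  | zero => intro _ _; rfl
  | succ t ih =>
    intro h1 h2
    show g (s + Λ) ++ jn g (s + Λ + 1) t = g s ++ jn g (s + 1) t
    rw [hper s h1 (by omega)]
    have := ih (s + 1) (by omega) (by omega)
    rw [show s + 1 + Λ = s + Λ + 1 by omega] at this
    rw [this]

lemma jn_pow {g : ℕ → List A} {a b Λ : ℕ}
    (hper : ∀ i, a ≤ i → i + Λ ≤ b → g (i + Λ) = g i) :
    ∀ (q : ℕ), a + q * Λ ≤ b → jn g a (q * Λ) = wpow (jn g a Λ) q := by
  intro q
  induction q with
  | zero => intro _; rw [Nat.zero_mul]; rfl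
  | succ q ih =>
    intro h
    have hmul : (q + 1) * Λ = q * Λ + Λ := by ring
    rw [show (q + 1) * Λ = Λ + q * Λ by ring, jn_add]
    have hsh : jn g (a + Λ) (q * Λ) = jn g a (q * Λ) :=
      jn_shift hper a (q * Λ) (le_refl a) (by omega)
    rw [hsh, ih (by omega)]
    rfl

lemma Jstruct (g : ℕ → List A) (m a b Λ c₁ : ℕ) (hΛ : 0 < Λ)
    (hper : ∀ i, a ≤ i → i + Λ ≤ b → g (i + Λ) = g i) (hb : b ≤ m)
    (hlen : ∀ i, (g i).length ≤ c₁) :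
    ∃ H V T k, jn g 0 m = H ++ wpow V k ++ T ∧ H.length ≤ a * c₁ ∧ V.length ≤ Λ * c₁ ∧
      T.length ≤ (Λ + (m - b)) * c₁ := by
  rcases le_or_gt (a + Λ) b with h2 | h1
  · -- at least room for computing periods
    have ham : a ≤ m := by omega
    have hΛpos : 0 < Λ := hΛ
    obtain ⟨q, Q, hQmul, hQle, hQmod⟩ :
        ∃ q Q, Q = q * Λ ∧ Q ≤ b - a ∧ b - a - Q < Λ := by
      refine ⟨(b - a) / Λ, Λ * ((b - a) / Λ), Nat.mul_comm _ _, ?_, ?_⟩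
      · have := Nat.div_add_mod (b - a) Λ
        omega
      · have := Nat.div_add_mod (b - a) Λ
        have := Nat.mod_lt (b - a) hΛpos
        omega
    refine ⟨jn g 0 a, jn g a Λ, jn g (a + Q) (m - a - Q), q, ?_, ?_, ?_, ?_⟩
    · conv_lhs => rw [show m = a + (Q + (m - a - Q)) by omega]
      rw [jn_add, Nat.zero_add, jn_add, show jn g a Q = wpow (jn g a Λ) q from by
        rw [hQmul]; exact jn_pow hper q (by omega), List.append_assoc]
    · exact le_trans (jn_len _ _ (fun i _ _ => hlen i)) (le_refl _)
    · exact jn_len _ _ (fun i _ _ => hlen i)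
    · refine le_trans (jn_len _ _ (fun i _ _ => hlen i)) (Nat.mul_le_mul_right _ ?_)
      omega
  · -- degenerate: no room
    refine ⟨jn g 0 (min a m), [], jn g (min a m) (m - min a m), 0, ?_, ?_, ?_, ?_⟩
    · rw [show wpow ([] : List A) 0 = [] from rfl, List.append_nil]
      conv_lhs => rw [show m = min a m + (m - min a m) by omega]
      rw [jn_add, Nat.zero_add]
    · refine le_trans (jn_len _ _ (fun i _ _ => hlen i)) (Nat.mul_le_mul_right _ ?_)
      omega
    · simp
    · refine le_trans (jn_len _ _ (fun i _ _ => hlen i)) (Nat.mul_le_mul_right _ ?_)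
      omega

end Bdd2
section Bdd3
variable [Fintype A]

lemma orbit_per {φ : A → A} {d : A} {i₁ i₂ : ℕ} (hlt : i₁ < i₂)
    (heq : φ^[i₁] d = φ^[i₂] d) :
    ∀ i, i₁ ≤ i → φ^[i + (i₂ - i₁)] d = φ^[i] d := by
  intro i hi
  rw [show i + (i₂ - i₁) = (i - i₁) + i₂ by omega, Function.iterate_add_apply, ← heq,
    ← Function.iterate_add_apply, show i - i₁ + i₁ = i by omega]

lemma orbit_per_iter {φ : A → A} {d : A} {i₁ i₂ : ℕ} (hlt : i₁ < i₂)
    (heq : φ^[i₁] d = φ^[i₂] d) :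
    ∀ (t : ℕ) (i : ℕ), i₁ ≤ i → φ^[i + (i₂ - i₁) * t] d = φ^[i] d := by
  intro t
  induction t with
  | zero => intro i _; rfl
  | succ t ih =>
    intro i hi
    rw [show i + (i₂ - i₁) * (t + 1) = (i + (i₂ - i₁) * t) + (i₂ - i₁) by ring,
      orbit_per hlt heq _ (by omega), ih i hi]

lemma orbit_exists (φ : A → A) (d : A) :
    ∃ i₁ i₂, i₁ < i₂ ∧ i₂ ≤ Fintype.card A ∧ φ^[i₁] d = φ^[i₂] d := by
  obtain ⟨x, y, hne, heq⟩ := Fintype.exists_ne_map_eq_of_card_lt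
    (fun i : Fin (Fintype.card A + 1) => φ^[(i : ℕ)] d) (by simp)
  rcases lt_or_gt_of_ne (fun h : (x : ℕ) = (y : ℕ) => hne (Fin.ext h)) with h | h
  · exact ⟨x, y, h, by omega, heq⟩
  · exact ⟨y, x, h, by omega, heq.symm⟩

lemma jn_reindex (g : ℕ → List A) : ∀ (s t : ℕ), jn g (s + 1) t = jn (fun i => g (i + 1)) s t := by
  intro s t
  induction t generalizing s with
  | zero => rfl
  | succ t ih =>
    show g (s + 1) ++ jn g (s + 1 + 1) t = g (s + 1) ++ jn (fun i => g (i + 1)) (s + 1) t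
    rw [ih (s + 1)]

lemma Pm_unfold (f : A → List A) : ∀ (m : ℕ) (d : A), ¬ Bdd f d →
    Pm f m d = jn (fun i => applyIter f (m - 1 - i) (Lf f ((muF f)^[i] d))) 0 m
      ++ Pm f 0 ((muF f)^[m] d) := by
  intro m
  induction m with
  | zero => intro d _; simp [jn]
  | succ m ih =>
    intro d hd
    rw [Pm_rec hd m, ih (muF f d) (mu_unbdd hd)]
    have e0 : jn (fun i => applyIter f (m + 1 - 1 - i) (Lf f ((muF f)^[i] d))) 0 (m + 1)
        = applyIter f m (Lf f d)
          ++ jn (fun i => applyIter f (m + 1 - 1 - i) (Lf f ((muF f)^[i] d))) 1 m := rfl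
    rw [e0, jn_reindex]
    have e1 : jn (fun i => applyIter f (m + 1 - 1 - (i + 1)) (Lf f ((muF f)^[i + 1] d))) 0 m
        = jn (fun i => applyIter f (m - 1 - i) (Lf f ((muF f)^[i] (muF f d)))) 0 m := by
      refine jn_congr 0 m (fun i _ _ => ?_)
      rw [show m + 1 - 1 - (i + 1) = m - 1 - i by omega, Function.iterate_succ_apply]
    rw [e1, Function.iterate_succ_apply, List.append_assoc]

lemma Pstruct (f : A → List A) : ∃ C, ∀ (m : ℕ) (d : A), ¬ Bdd f d →
    ∃ H V T k, Pm f m d = H ++ wpow V k ++ T ∧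
      H.length ≤ C ∧ V.length ≤ C ∧ T.length ≤ C := by
  obtain ⟨n₀, p, hp_pos, hper⟩ := exists_np f
  set c₁ := Kb f * Mb f with hc₁
  set CA := Fintype.card A with hCA
  refine ⟨(CA + 1 + p * (CA + 1) + (p * (CA + 1) + n₀ + 1)) * c₁ + 1, ?_⟩
  intro m d hd
  obtain ⟨i₁, i₂, hi12, hi2, horb⟩ := orbit_exists (muF f) d
  set π := i₂ - i₁ with hπ
  set Λ := p * π with hΛdef
  have hΛpos : 0 < Λ := by
    have : 0 < π := by omega
    exact Nat.mul_pos hp_pos this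
  set g : ℕ → List A := fun i => applyIter f (m - 1 - i) (Lf f ((muF f)^[i] d)) with hg
  have hbw : ∀ i, Bw f (Lf f ((muF f)^[i] d)) :=
    fun i => (Lf_spec (mu_iter_unbdd hd i)).2.1
  have hlen : ∀ i, (g i).length ≤ c₁ := by
    intro i
    refine le_trans (bw_len (hbw i) _) ?_
    exact Nat.mul_le_mul (le_refl _) (Lf_len _)
  have hgper : ∀ i, i₁ ≤ i → i + Λ ≤ m - 1 - n₀ → g (i + Λ) = g i := by
    intro i h1 h2
    show applyIter f (m - 1 - (i + Λ)) (Lf f ((muF f)^[i + Λ] d))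
      = applyIter f (m - 1 - i) (Lf f ((muF f)^[i] d))
    have horb2 : (muF f)^[i + Λ] d = (muF f)^[i] d := by
      rw [show i + Λ = i + π * p by rw [hΛdef]; ring]
      exact orbit_per_iter hi12 horb p i h1
    have earith : m - 1 - i = (m - 1 - (i + Λ)) + p * π := by omega
    rw [horb2, earith]
    exact (per_word_iter hper (hbw i) (show n₀ ≤ m - 1 - (i + Λ) by omega) π).symm
  obtain ⟨H, V, T, k, hJ, hHl, hVl, hTl⟩ :=
    Jstruct g m i₁ (m - 1 - n₀) Λ c₁ hΛpos hgper (by omega) hlen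
  refine ⟨H, V, T ++ Pm f 0 ((muF f)^[m] d), k, ?_, ?_, ?_, ?_⟩
  · rw [Pm_unfold f m d hd, hJ, List.append_assoc, List.append_assoc]
  · refine le_trans hHl (le_trans (Nat.mul_le_mul (show i₁ ≤ CA + 1 + p * (CA + 1)
      + (p * (CA + 1) + n₀ + 1) by omega) (le_refl c₁)) (Nat.le_succ _))
  · have hΛle : Λ ≤ p * (CA + 1) := Nat.mul_le_mul (le_refl p) (by omega)
    refine le_trans hVl (le_trans (Nat.mul_le_mul (show Λ ≤ CA + 1 + p * (CA + 1)
      + (p * (CA + 1) + n₀ + 1) by omega) (le_refl c₁)) (Nat.le_succ _))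
  · rw [List.length_append]
    have h1 := Pm_zero_len f ((muF f)^[m] d)
    have hΛle : Λ ≤ p * (CA + 1) := Nat.mul_le_mul (le_refl p) (by omega)
    have h2 : Λ + (m - (m - 1 - n₀)) ≤ CA + 1 + p * (CA + 1) + (p * (CA + 1) + n₀ + 1) := by
      omega
    have h3 := Nat.mul_le_mul h2 (le_refl c₁)
    omega

end Bdd3
/-! ### reversal: maximal bounded suffixes -/

def revM (f : A → List A) : A → List A := fun c => (f c).reverse

lemma am_rev (f : A → List A) : ∀ (u : List A),
    applyMorphism (revM f) u.reverse = (applyMorphism f u).reverse := by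
  intro u
  induction u with
  | nil => rfl
  | cons c t ih =>
    rw [show applyMorphism f (c :: t) = f c ++ applyMorphism f t from rfl,
      List.reverse_append, List.reverse_cons, am_append, ih]
    congr 1
    rw [am_single]
    rfl

lemma ai_rev (f : A → List A) : ∀ (n : ℕ) (u : List A),
    applyIter (revM f) n u.reverse = (applyIter f n u).reverse := by
  intro n
  induction n with
  | zero => intro u; rfl
  | succ n ih =>
    intro u
    rw [ai_succ_left, ai_succ_left, am_rev]
    exact ih _

section RevBdd
variable [Fintype A]

lemma bdd_rev {f : A → List A} {b : A} : Bdd (revM f) b ↔ Bdd f b := by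
  have hlen : ∀ n, (applyIter (revM f) n [b]).length = (applyIter f n [b]).length := by
    intro n
    have h := congrArg List.length (ai_rev f n [b])
    simpa using h
  constructor
  · rintro ⟨k, hk⟩; exact ⟨k, fun n => by rw [← hlen]; exact hk n⟩
  · rintro ⟨k, hk⟩; exact ⟨k, fun n => by rw [hlen]; exact hk n⟩

noncomputable def Sm (f : A → List A) (m : ℕ) (d : A) : List A :=
  (Pm (revM f) m d).reverse

lemma Sm_max {f : A → List A} {m : ℕ} {d : A} {α : List A}
    (hsuf : α <:+ applyIter f m [d]) (hbw : Bw f α) : α <:+ Sm f m d := by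
  have h1 : α.reverse <+: applyIter (revM f) m [d] := by
    rw [show [d] = [d].reverse from rfl, ai_rev]
    exact List.reverse_prefix.mpr hsuf
  have h2 : Bw (revM f) α.reverse := fun b hb =>
    bdd_rev.mpr (hbw b (List.mem_reverse.mp hb))
  have h3 : α.reverse <+: Pm (revM f) m d := prefix_maxBpre h1 h2
  have h4 : α.reverse <+: (Sm f m d).reverse := by
    rw [Sm, List.reverse_reverse]
    exact h3
  exact List.reverse_prefix.mp h4

lemma Sstruct (f : A → List A) : ∃ C, ∀ (m : ℕ) (d : A), ¬ Bdd f d →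
    ∃ H V T k, Sm f m d = H ++ wpow V k ++ T ∧
      H.length ≤ C ∧ V.length ≤ C ∧ T.length ≤ C := by
  obtain ⟨C, hC⟩ := Pstruct (revM f)
  refine ⟨C, fun m d hd => ?_⟩
  obtain ⟨H, V, T, k, heq, h1, h2, h3⟩ := hC m d (fun hb => hd (bdd_rev.mp hb))
  refine ⟨T.reverse, V.reverse, H.reverse, k, ?_, ?_, ?_, ?_⟩
  · rw [Sm, heq, List.reverse_append, List.reverse_append, wpow_reverse, List.append_assoc]
  · rwa [List.length_reverse]
  · rwa [List.length_reverse]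
  · rwa [List.length_reverse]

/-! ### decomposition of factors of morphic images -/

lemma drop_am (g : A → List A) : ∀ (u : List A) (s : ℕ),
    ∃ α u₂, (applyMorphism g u).drop s = α ++ applyMorphism g u₂ ∧ u₂ <:+ u ∧
      (α = [] ∨ ∃ e, e ∈ u ∧ α <:+ g e) := by
  intro u
  induction u with
  | nil =>
    intro s
    exact ⟨[], [], by simp [applyMorphism], List.suffix_refl _, Or.inl rfl⟩
  | cons c t ih =>
    intro s
    rw [show applyMorphism g (c :: t) = g c ++ applyMorphism g t from rfl]
    rcases lt_or_ge s (g c).length with hs | hs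
    · refine ⟨(g c).drop s, t, ?_, List.suffix_cons c t, Or.inr ⟨c, by simp, List.drop_suffix _ _⟩⟩
      rw [List.drop_append_of_le_length (le_of_lt hs)]
    · obtain ⟨α, u₂, h1, h2, h3⟩ := ih (s - (g c).length)
      refine ⟨α, u₂, ?_, h2.trans (List.suffix_cons c t), ?_⟩
      · conv_lhs => rw [show s = (g c).length + (s - (g c).length) by omega]
        rw [List.drop_length_add_append, h1]
      · rcases h3 with h3 | ⟨e, he, hα⟩
        · exact Or.inl h3
        · exact Or.inr ⟨e, by simp [he], hα⟩

lemma prefix_am (g : A → List A) : ∀ (u w : List A), w <+: applyMorphism g u →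
    ∃ v β, w = applyMorphism g v ++ β ∧ v <+: u ∧
      (β = [] ∨ ∃ e, e ∈ u ∧ β <+: g e ∧ β ≠ []) := by
  intro u
  induction u with
  | nil =>
    intro w hw
    rw [show applyMorphism g [] = [] from rfl, List.prefix_nil] at hw
    exact ⟨[], [], by simp [hw, applyMorphism], List.prefix_refl _, Or.inl rfl⟩
  | cons c t ih =>
    intro w hw
    rw [show applyMorphism g (c :: t) = g c ++ applyMorphism g t from rfl] at hw
    rcases List.prefix_or_prefix_of_prefix hw (List.prefix_append (g c) _) with h | h
    · rcases eq_or_ne w [] with rfl | hne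
      · exact ⟨[], [], by simp [applyMorphism], List.nil_prefix, Or.inl rfl⟩
      · exact ⟨[], w, by simp [applyMorphism], List.nil_prefix, Or.inr ⟨c, by simp, h, hne⟩⟩
    · obtain ⟨w', rfl⟩ := h
      have hw' : w' <+: applyMorphism g t := prefix_cancel hw
      obtain ⟨v, β, h1, h2, h3⟩ := ih w' hw'
      refine ⟨c :: v, β, ?_, List.cons_prefix_cons.mpr ⟨rfl, h2⟩, ?_⟩
      · rw [show applyMorphism g (c :: v) = g c ++ applyMorphism g v from rfl, h1,
          List.append_assoc]
      · rcases h3 with h3 | ⟨e, he, hβ, hβne⟩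
        · exact Or.inl h3
        · exact Or.inr ⟨e, by simp [he], hβ, hβne⟩

lemma bw_letters {f : A → List A} {v : List A} {m : ℕ}
    (h : Bw f (applyIter f m v)) : Bw f v := by
  intro e he
  obtain ⟨s, t, hst⟩ := List.append_of_mem he
  refine bdd_of_ai_bw (m := m) (fun b hb => ?_)
  apply h
  rw [hst, show s ++ e :: t = s ++ [e] ++ t by simp, ai_append, ai_append]
  simp only [List.mem_append]
  exact Or.inl (Or.inr hb)

end RevBdd
section FI
variable [Fintype A]

lemma FI (f : A → List A) {a : A} (ha : ¬ Bdd f a) :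
    ∀ (m : ℕ) (c : A) (w : List A), Bw f w → w <:+: applyIter f m [c] →
    ∃ m' d d' v, m' ≤ m ∧ ¬ Bdd f d ∧ ¬ Bdd f d' ∧ Bw f v ∧ v.length ≤ Mb f + 2 ∧
      w <:+: Sm f m' d ++ applyIter f m' v ++ Pm f m' d' := by
  intro m
  induction m with
  | zero =>
    intro c w hw hinf
    by_cases hc : Bdd f c
    · refine ⟨0, a, a, [c], le_refl 0, ha, ha, fun b hb => ?_, ?_, ?_⟩
      · rw [List.mem_singleton] at hb; subst hb; exact hc
      · rw [List.length_singleton]; omega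
      · exact hinf.trans (List.infix_append _ _ _)
    · rw [ai_zero] at hinf
      rcases w with _ | ⟨b, w'⟩
      · exact ⟨0, a, a, [], le_refl 0, ha, ha, fun b hb => absurd hb List.not_mem_nil,
          by simp, List.nil_infix⟩
      · have hb : b ∈ ([c] : List A) := hinf.subset (by simp)
        rw [List.mem_singleton] at hb
        exact absurd (hb ▸ hw b (by simp)) hc
  | succ m ih =>
    intro c w hw hinf
    by_cases hc : Bdd f c
    · refine ⟨m + 1, a, a, [c], le_refl _, ha, ha, fun b hb => ?_, ?_, ?_⟩
      · rw [List.mem_singleton] at hb; subst hb; exact hc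
      · rw [List.length_singleton]; omega
      · exact hinf.trans (List.infix_append _ _ _)
    · have hun : applyIter f (m + 1) [c]
          = applyMorphism (fun e => applyIter f m [e]) (f c) := by
        rw [ai_succ_left, am_single, ai_blocks]
        rfl
      rw [hun] at hinf
      obtain ⟨s, hpre⟩ : ∃ s, w <+:
          (applyMorphism (fun e => applyIter f m [e]) (f c)).drop s := by
        obtain ⟨t, r, hw2⟩ := hinf
        refine ⟨t.length, ?_⟩
        rw [← hw2, show t ++ w ++ r = t ++ (w ++ r) by simp, List.drop_left]
        exact ⟨r, rfl⟩
      obtain ⟨α, u₂, hdrop, hsuf, hα⟩ := drop_am (fun e => applyIter f m [e]) (f c) s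
      rw [hdrop] at hpre
      rcases List.prefix_or_prefix_of_prefix hpre (List.prefix_append α _) with h | h
      · -- w inside α
        rcases hα with rfl | ⟨e, he, hαe⟩
        · rw [List.prefix_nil] at h
          subst h
          exact ⟨0, a, a, [], by omega, ha, ha, fun b hb => absurd hb List.not_mem_nil,
            by simp, List.nil_infix⟩
        · have hwe : w <:+: applyIter f m [e] :=
            List.infix_iff_prefix_suffix.mpr ⟨α, h, hαe⟩
          obtain ⟨m', d, d', v, hm', h1, h2, h3, h4, h5⟩ := ih e w hw hwe
          exact ⟨m', d, d', v, by omega, h1, h2, h3, h4, h5⟩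
      · obtain ⟨w₂, rfl⟩ := h
        have hw₂ : w₂ <+: applyMorphism (fun e => applyIter f m [e]) u₂ := prefix_cancel hpre
        obtain ⟨v, β, hw2eq, hv, hβ⟩ := prefix_am _ u₂ w₂ hw₂
        have hGv : applyMorphism (fun e => applyIter f m [e]) v = applyIter f m v :=
          (ai_blocks f m v).symm
        have hwα : Bw f α := fun b hb => hw b (List.mem_append.mpr (Or.inl hb))
        have hvbw : Bw f v := by
          refine bw_letters (m := m) (fun b hb => hw b ?_)
          rw [← hGv] at hb
          exact List.mem_append.mpr (Or.inr (hw2eq ▸ List.mem_append.mpr (Or.inl hb)))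
        have hβbw : Bw f β := by
          intro b hb
          exact hw b (List.mem_append.mpr (Or.inr (hw2eq ▸ List.mem_append.mpr (Or.inr hb))))
        -- left boundary
        have hleft : ∃ dL vL pre, ¬ Bdd f dL ∧ Bw f vL ∧ vL.length ≤ 1 ∧
            Sm f m dL ++ applyIter f m vL = pre ++ α := by
          rcases hα with rfl | ⟨e, _, hαe⟩
          · exact ⟨a, [], Sm f m a, ha, fun b hb => absurd hb List.not_mem_nil, by simp,
              by rw [ai_nil]⟩
          · by_cases he : Bdd f e
            · obtain ⟨pre', hpre'⟩ := hαe
              exact ⟨a, [e], Sm f m a ++ pre', ha,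
                fun b hb => by rw [List.mem_singleton] at hb; subst hb; exact he,
                by simp, by rw [← hpre', List.append_assoc]⟩
            · obtain ⟨pre, hpre'⟩ := Sm_max hαe hwα
              exact ⟨e, [], pre, he, fun b hb => absurd hb List.not_mem_nil, by simp,
                by rw [ai_nil, List.append_nil, hpre']⟩
        -- right boundary
        have hright : ∃ dR vR post, ¬ Bdd f dR ∧ Bw f vR ∧ vR.length ≤ 1 ∧
            applyIter f m vR ++ Pm f m dR = β ++ post := by
          rcases hβ with rfl | ⟨e, _, hβe, _⟩
          · exact ⟨a, [], Pm f m a, ha, fun b hb => absurd hb List.not_mem_nil, by simp,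
              by rw [ai_nil]⟩
          · by_cases he : Bdd f e
            · obtain ⟨post', hpost'⟩ := hβe
              exact ⟨a, [e], post' ++ Pm f m a, ha,
                fun b hb => by rw [List.mem_singleton] at hb; subst hb; exact he,
                by simp, by rw [← hpost', List.append_assoc]⟩
            · obtain ⟨post, hpost'⟩ := prefix_maxBpre hβe hβbw
              exact ⟨e, [], post, he, fun b hb => absurd hb List.not_mem_nil, by simp,
                by rw [ai_nil, List.nil_append]; exact hpost'.symm⟩
        obtain ⟨dL, vL, pre, hdL, hvL, hvLlen, hpreL⟩ := hleft
        obtain ⟨dR, vR, post, hdR, hvR, hvRlen, hpostR⟩ := hright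
        have hvlen : v.length ≤ Mb f :=
          hv.length_le.trans (hsuf.length_le.trans (Mb_spec f c))
        refine ⟨m, dL, dR, vL ++ v ++ vR, by omega, hdL, hdR, ?_, ?_, ?_⟩
        · intro b hb
          simp only [List.mem_append] at hb
          rcases hb with (hb | hb) | hb
          · exact hvL b hb
          · exact hvbw b hb
          · exact hvR b hb
        · simp only [List.length_append]
          omega
        · refine ⟨pre, post, ?_⟩
          rw [hw2eq, hGv, ai_append, ai_append]
          calc pre ++ (α ++ (applyIter f m v ++ β)) ++ post
              = (pre ++ α) ++ applyIter f m v ++ (β ++ post) := by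
                simp [List.append_assoc]
            _ = (Sm f m dL ++ applyIter f m vL) ++ applyIter f m v
                ++ (applyIter f m vR ++ Pm f m dR) := by rw [hpreL, hpostR]
            _ = Sm f m dL ++ (applyIter f m vL ++ applyIter f m v ++ applyIter f m vR)
                ++ Pm f m dR := by simp [List.append_assoc]

end FI

end S3

open S3 in
theorem stmt3 {A : Type*} [Fintype A] (f : A → List A) (a : A) (x : ℕ → A)
    (hx : IsPureMorphic f a x) (z : ℕ → A) (hz : InOrbitClosure z x)
    (hbdd : ∀ i : ℕ, ∃ k : ℕ, ∀ n : ℕ, (applyIter f n [z i]).length ≤ k) :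
    UltimatelyPeriodic z := by
  classical
  obtain ⟨hx0, ⟨s, hfa, hsne, hsiter⟩, himg⟩ := hx
  -- a is unbounded
  have hiter_a : ∀ n, applyIter f (n + 1) [a] = applyIter f n [a] ++ applyIter f n s := by
    intro n
    rw [ai_succ_left, am_single, hfa, show a :: s = [a] ++ s from rfl, ai_append]
  have hlen_a : ∀ n, n + 1 ≤ (applyIter f n [a]).length := by
    intro n
    induction n with
    | zero => simp [ai_zero]
    | succ n ihn =>
      rw [hiter_a n, List.length_append]
      have h1 : 0 < (applyIter f n s).length := List.length_pos_iff.mpr (hsiter n)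
      omega
  have ha : ¬ Bdd f a := by
    rintro ⟨k, hk⟩
    have h1 := hk k
    have h2 := hlen_a k
    omega
  -- iterates of a are prefixes of x
  have hpre_a : ∀ n, applyIter f n [a] = wordPrefix x (applyIter f n [a]).length := by
    intro n
    induction n with
    | zero =>
      rw [ai_zero]
      simp [wordPrefix, List.ofFn_succ, hx0]
    | succ n ihn =>
      have h2 : wordPrefix x (applyMorphism f (wordPrefix x (applyIter f n [a]).length)).length
          = applyMorphism f (wordPrefix x (applyIter f n [a]).length) :=
        himg (applyIter f n [a]).length
      rw [← ihn] at h2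
      rw [ai_succ_right]
      exact h2.symm
  -- prefixes of z are infix of iterates of a
  have hfac : ∀ L, ∃ mL, wordPrefix z L <:+: applyIter f mL [a] := by
    intro L
    have hfz : IsFactor (wordPrefix z L) z := by
      refine ⟨0, ?_⟩
      apply List.ext_getElem?
      intro n
      rcases lt_or_ge n L with hn | hn
      · rw [wordPrefix_getElem? z hn, List.getElem?_ofFn]
        simp only [List.ofFnNthVal, wordPrefix_length]
        rw [dif_pos hn]
        simp
      · rw [List.getElem?_eq_none (by rw [wordPrefix_length]; omega),
          List.getElem?_eq_none (by rw [List.length_ofFn, wordPrefix_length]; omega)]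
    obtain ⟨i, hi⟩ := hz _ hfz
    have h5 : wordPrefix z L = wordPrefix (shiftw i x) L := by
      apply List.ext_getElem?
      intro n
      rcases lt_or_ge n L with hn | hn
      · rw [hi, List.getElem?_ofFn]
        simp only [List.ofFnNthVal, wordPrefix_length]
        rw [dif_pos hn, wordPrefix_getElem? _ hn]
        simp [shiftw, Nat.add_comm]
      · rw [hi, List.getElem?_eq_none (by rw [List.length_ofFn, wordPrefix_length]; omega),
          List.getElem?_eq_none (by rw [wordPrefix_length]; omega)]
    refine ⟨i + L, ?_⟩
    have h6 : wordPrefix z L <:+: wordPrefix x (i + L) := by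
      refine ⟨wordPrefix x i, [], ?_⟩
      rw [List.append_nil, h5, ← wordPrefix_add]
    have h7 : wordPrefix x (i + L) <+: applyIter f (i + L) [a] := by
      rw [hpre_a (i + L), wordPrefix_split (show i + L ≤ (applyIter f (i + L) [a]).length by
        have := hlen_a (i + L); omega)]
      exact ⟨_, rfl⟩
    exact h6.trans h7.isInfix
  -- prefixes of z have bounded letters
  have hbwz : ∀ L, Bw f (wordPrefix z L) := by
    intro L b hb
    rw [wordPrefix, List.mem_ofFn] at hb
    obtain ⟨j, hj⟩ := hb
    exact hj ▸ hbdd (j : ℕ)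
  -- structure constants
  obtain ⟨C1, hC1⟩ := Sstruct f
  obtain ⟨C2, hC2⟩ := Pstruct f
  set C0 := C1 + C2 + Kb f * (Mb f + 2) with hC0
  haveI hfinW : Finite {l : List A // l.length ≤ C0} := (List.finite_length_le A C0).to_subtype
  -- per-prefix template
  have key : ∀ N : ℕ, ∃ L, N ≤ L ∧ ∃ t : {l : List A // l.length ≤ C0} × {l : List A // l.length ≤ C0}
      × {l : List A // l.length ≤ C0} × {l : List A // l.length ≤ C0} × {l : List A // l.length ≤ C0},
      ∃ k l' : ℕ,
      wordPrefix z L <:+: t.1.val ++ wpow t.2.1.val k ++ t.2.2.1.val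
        ++ wpow t.2.2.2.1.val l' ++ t.2.2.2.2.val := by
    intro N
    refine ⟨N, le_refl N, ?_⟩
    obtain ⟨mL, hinf⟩ := hfac N
    obtain ⟨m', d, d', v, _, hd, hd', hvbw, hvlen, hfin5⟩ :=
      FI f ha mL a (wordPrefix z N) (hbwz N) hinf
    obtain ⟨H, V, T, k, hSeq, hH, hV, hT⟩ := hC1 m' d hd
    obtain ⟨H', V', T', l', hPeq, hH', hV', hT'⟩ := hC2 m' d' hd'
    have hmid : (applyIter f m' v).length ≤ Kb f * (Mb f + 2) :=
      le_trans (bw_len hvbw m') (Nat.mul_le_mul (le_refl _) hvlen)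
    refine ⟨⟨⟨H, by omega⟩, ⟨V, by omega⟩, ⟨T ++ applyIter f m' v ++ H', by
        simp only [List.length_append]; omega⟩, ⟨V', by omega⟩, ⟨T', by omega⟩⟩, k, l', ?_⟩
    have heq2 : (H ++ wpow V k ++ (T ++ applyIter f m' v ++ H') ++ wpow V' l' ++ T')
        = Sm f m' d ++ applyIter f m' v ++ Pm f m' d' := by
      rw [hSeq, hPeq]
      simp [List.append_assoc]
    show wordPrefix z N <:+:
      H ++ wpow V k ++ (T ++ applyIter f m' v ++ H') ++ wpow V' l' ++ T'
    rw [heq2]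
    exact hfin5
  obtain ⟨t, ht⟩ := freq_pigeon _ key
  obtain ⟨w1, w2, w3, w4, w5⟩ := t
  refine Tfac [(w1.val, false), (w2.val, true), (w3.val, false), (w4.val, true),
    (w5.val, false)] z ?_
  intro N
  obtain ⟨L, hL, k, l', hinf⟩ := ht N
  refine ⟨L, hL, fun i => match i with | 1 => k | 3 => l' | _ => 0, ?_⟩
  obtain ⟨tt, rr, heq⟩ := hinf
  refine ⟨tt.length, ?_⟩
  have hpj : pjoin [(w1.val, false), (w2.val, true), (w3.val, false), (w4.val, true),
      (w5.val, false)] (fun i => match i with | 1 => k | 3 => l' | _ => 0)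
      = w1.val ++ (wpow w2.val k ++ (w3.val ++ (wpow w4.val l' ++ (w5.val ++ [])))) := rfl
  rw [hpj]
  simp only [List.append_nil]
  simp only [List.append_assoc] at heq
  rw [← heq, List.drop_left]
  exact List.prefix_append _ _
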